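/- Let I, J be ideals in K[x_0,…,x_N] written as finite intersections I = I_1 ∩ I_2 ∩ … ∩ I_s and J = J_1 ∩ J_2 ∩ … ∩ J_t (for instance, primary decompositions). Then I ⋆ J = ⋂_{1≤i≤s, 1≤j≤t} (I_i ⋆ J_j). -/

import Mathlib

open MvPolynomial

noncomputable section

section Slice
variable {K : Type*} [Field K] {σ : Type*} {R : Type*} [CommRing R] [Algebra K R]

def lslice (l : R →ₗ[K] K) (f : MvPolynomial σ R) : MvPolynomial σ K :=
  f.support.sum fun m => monomial m (l (coeff m f))

theorem coeff_lslice (l : R →ₗ[K] K) (f : MvPolynomial σ R) (m : σ →₀ ℕ) :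
    coeff m (lslice l f) = l (coeff m f) := by
  classical
  rw [lslice, coeff_sum]
  simp only [coeff_monomial]
  rw [Finset.sum_ite_eq' f.support m (fun m' => l (coeff m' f))]
  split_ifs with h
  · rfl
  · rw [notMem_support_iff.mp h, map_zero]

theorem lslice_zero (l : R →ₗ[K] K) : lslice l (0 : MvPolynomial σ R) = 0 := by
  ext m; simp [coeff_lslice]

theorem lslice_add (l : R →ₗ[K] K) (f g : MvPolynomial σ R) :
    lslice l (f + g) = lslice l f + lslice l g := by
  ext m; simp [coeff_lslice, coeff_add, map_add]

theorem lslice_C_mul (l : R →ₗ[K] K) (r : R) (f : MvPolynomial σ R) :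
    lslice l (C r * f) = lslice (l ∘ₗ LinearMap.mulLeft K r) f := by
  ext m; simp [coeff_lslice, coeff_C_mul]

theorem lslice_X_mul (l : R →ₗ[K] K) (i : σ) (f : MvPolynomial σ R) :
    lslice l (X i * f) = X i * lslice l f := by
  classical
  ext m
  simp [coeff_lslice, coeff_X_mul', apply_ite l]

theorem lslice_map (l : R →ₗ[K] K) (g : MvPolynomial σ K) :
    lslice l (MvPolynomial.map (algebraMap K R) g) = l 1 • g := by
  ext m
  rw [coeff_lslice, coeff_map, Algebra.algebraMap_eq_smul_one, map_smul]
  simp [smul_eq_mul, mul_comm]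

theorem lslice_C (l : R →ₗ[K] K) (r : R) :
    lslice l (C r : MvPolynomial σ R) = C (l r) := by
  classical
  ext m
  rw [coeff_lslice, coeff_C, coeff_C, apply_ite l, map_zero]

variable (I : Ideal (MvPolynomial σ K)) (J : Ideal R)

/-- The predicate cutting out `I^e + J^e`. -/
def slicePred (f : MvPolynomial σ R) : Prop :=
  ∀ l : R →ₗ[K] K, (∀ r ∈ J, l r = 0) → lslice l f ∈ I

theorem slicePred_mul {I : Ideal (MvPolynomial σ K)} {J : Ideal R}
    (c : MvPolynomial σ R) :
    ∀ f : MvPolynomial σ R, slicePred I J f → slicePred I J (c * f) := by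
  induction c using MvPolynomial.induction_on with
  | C r =>
    intro f hf l hl
    rw [lslice_C_mul]
    refine hf _ fun x hx => ?_
    simpa using hl _ (J.mul_mem_left r hx)
  | add p q hp hq =>
    intro f hf l hl
    rw [add_mul, lslice_add]
    exact I.add_mem (hp f hf l hl) (hq f hf l hl)
  | mul_X p i hp =>
    intro f hf
    rw [mul_assoc]
    refine hp (X i * f) fun l hl => ?_
    rw [lslice_X_mul]
    exact I.mul_mem_left _ (hf l hl)

/-- The ideal of polynomials whose coefficient slices along functionals vanishing on `J`
lie in `I`. -/
def sliceIdeal : Ideal (MvPolynomial σ R) where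
  carrier := {f | slicePred I J f}
  zero_mem' := fun l _ => by rw [lslice_zero]; exact I.zero_mem
  add_mem' := fun {f g} hf hg l hl => by
    rw [lslice_add]; exact I.add_mem (hf l hl) (hg l hl)
  smul_mem' := fun c f hf => by
    simpa [smul_eq_mul] using slicePred_mul c f hf

theorem sup_le_sliceIdeal :
    Ideal.map (MvPolynomial.map (algebraMap K R)) I ⊔ Ideal.map (C : R →+* MvPolynomial σ R) J
      ≤ sliceIdeal I J := by
  refine sup_le ?_ ?_
  · rw [Ideal.map_le_iff_le_comap]
    intro g hg l hl
    rw [lslice_map, MvPolynomial.smul_eq_C_mul]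
    exact I.mul_mem_left _ hg
  · rw [Ideal.map_le_iff_le_comap]
    intro r hr l hl
    show lslice l (C r : MvPolynomial σ R) ∈ I
    rw [lslice_C, hl r hr, map_zero]
    exact I.zero_mem

theorem sliceIdeal_le_sup :
    sliceIdeal I J ≤
      Ideal.map (MvPolynomial.map (algebraMap K R)) I ⊔ Ideal.map (C : R →+* MvPolynomial σ R) J := by
  classical
  intro f hf
  obtain ⟨W, hW⟩ := Submodule.exists_isCompl (Submodule.restrictScalars K (J : Submodule R R))
  set prW : R →ₗ[K] W := Submodule.projectionOnto W _ hW.symm with hprW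
  have hpr0 : ∀ r ∈ J, prW r = 0 := fun r hr =>
    Submodule.projectionOnto_apply_of_mem_right hW.symm hr
  have hsub : ∀ r : R, r - (prW r : R) ∈ J := by
    intro r
    have h := Submodule.projection_add_projection_eq_self hW.symm r
    rw [Submodule.projection_apply, Submodule.projection_apply] at h
    have h2 : r - (prW r : R) =
        ((Submodule.restrictScalars K (J : Submodule R R)).projectionOnto W hW.symm.symm r : R) := by
      nth_rewrite 1 [← h]
      ring
    rw [h2]
    exact ((Submodule.restrictScalars K (J : Submodule R R)).projectionOnto W hW.symm.symm r).2
  set b := Module.Basis.ofVectorSpace K W with hb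
  set l : Module.Basis.ofVectorSpaceIndex K W → (R →ₗ[K] K) := fun k => (b.coord k) ∘ₗ prW with hl
  set F : Finset (Module.Basis.ofVectorSpaceIndex K W) :=
    f.support.biUnion (fun m => (b.repr (prW (coeff m f))).support) with hF
  have hFsub : ∀ m : σ →₀ ℕ, (b.repr (prW (coeff m f))).support ⊆ F := by
    intro m
    by_cases hm : m ∈ f.support
    · exact Finset.subset_biUnion_of_mem (fun m => (b.repr (prW (coeff m f))).support) hm
    · rw [notMem_support_iff.mp hm]
      simp
  set g : MvPolynomial σ R :=
    ∑ k ∈ F, C (b k : R) * (MvPolynomial.map (algebraMap K R)) (lslice (l k) f) with hg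
  have hgI : g ∈ Ideal.map (MvPolynomial.map (algebraMap K R)) I := by
    refine Ideal.sum_mem _ fun k _ => Ideal.mul_mem_left _ _ (Ideal.mem_map_of_mem _ ?_)
    refine hf (l k) fun r hr => ?_
    simp [hl, hpr0 r hr]
  have hfgJ : f - g ∈ Ideal.map (C : R →+* MvPolynomial σ R) J := by
    rw [MvPolynomial.mem_map_C_iff]
    intro m
    have hcg : coeff m g = ∑ k ∈ F, (b.repr (prW (coeff m f))) k • (b k : R) := by
      rw [hg, MvPolynomial.coeff_sum]
      refine Finset.sum_congr rfl fun k _ => ?_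
      rw [coeff_C_mul, coeff_map, coeff_lslice, mul_comm, ← Algebra.smul_def]
      simp [hl]
    have hsum : (∑ k ∈ F, (b.repr (prW (coeff m f))) k • (b k)) = prW (coeff m f) := by
      rw [← Finset.sum_subset (hFsub m) (fun k _ hk => by
        rw [Finsupp.notMem_support_iff.mp hk, zero_smul])]
      have := b.linearCombination_repr (prW (coeff m f))
      rwa [Finsupp.linearCombination_apply, Finsupp.sum] at this
    have hcoe : ((prW (coeff m f) : W) : R)
        = ∑ k ∈ F, (b.repr (prW (coeff m f))) k • (b k : R) := by
      conv_lhs => rw [← hsum]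
      push_cast
      rfl
    have hcg2 : coeff m g = (prW (coeff m f) : R) := hcg.trans hcoe.symm
    rw [coeff_sub, hcg2]
    exact hsub _
  have : f = (f - g) + g := by ring
  rw [this]
  exact Submodule.add_mem _ (le_sup_right (α := Ideal (MvPolynomial σ R)) hfgJ)
    (le_sup_left (α := Ideal (MvPolynomial σ R)) hgI)

theorem sup_eq_sliceIdeal :
    Ideal.map (MvPolynomial.map (algebraMap K R)) I ⊔ Ideal.map (C : R →+* MvPolynomial σ R) J
      = sliceIdeal I J :=
  le_antisymm (sup_le_sliceIdeal I J) (sliceIdeal_le_sup I J)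

theorem iInf_sup_eq_V {ι : Sort*} (Is : ι → Ideal (MvPolynomial σ K)) (J : Ideal R) :
    (⨅ i, (Ideal.map (MvPolynomial.map (algebraMap K R)) (Is i)
        ⊔ Ideal.map (C : R →+* MvPolynomial σ R) J))
      = Ideal.map (MvPolynomial.map (algebraMap K R)) (⨅ i, Is i)
        ⊔ Ideal.map (C : R →+* MvPolynomial σ R) J := by
  ext f
  simp only [Submodule.mem_iInf, sup_eq_sliceIdeal]
  constructor
  · intro h l hl
    exact (Submodule.mem_iInf _).mpr fun i => h i l hl
  · intro h i l hl
    exact (Submodule.mem_iInf _).mp (h l hl) i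

end Slice

section Transfer
variable {K : Type*} [Field K] {σ τ : Type*}

lemma comap_sup_of_surjective {A B : Type*} [CommRing A] [CommRing B] (f : A →+* B)
    (hf : Function.Surjective f) (X Y : Ideal B) :
    Ideal.comap f (X ⊔ Y) = Ideal.comap f X ⊔ Ideal.comap f Y := by
  refine le_antisymm ?_ (sup_le (Ideal.comap_mono le_sup_left) (Ideal.comap_mono le_sup_right))
  have hX := Ideal.map_comap_of_surjective f hf X
  have hY := Ideal.map_comap_of_surjective f hf Y
  have h : X ⊔ Y = Ideal.map f (Ideal.comap f X ⊔ Ideal.comap f Y) := by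
    rw [Ideal.map_sup, hX, hY]
  rw [h, Ideal.comap_map_of_surjective f hf]
  refine sup_le le_rfl ?_
  exact le_trans (Ideal.comap_mono bot_le) (le_trans le_rfl le_sup_left)

lemma comp_inl_eq :
    (↑(sumAlgEquiv K σ τ) : MvPolynomial (σ ⊕ τ) K →+* MvPolynomial σ (MvPolynomial τ K)).comp
        (rename (Sum.inl : σ → σ ⊕ τ)).toRingHom
      = (MvPolynomial.map (algebraMap K (MvPolynomial τ K))) := by
  apply MvPolynomial.ringHom_ext <;> intro x <;> simp

lemma comp_inr_eq :
    (↑(sumAlgEquiv K σ τ) : MvPolynomial (σ ⊕ τ) K →+* MvPolynomial σ (MvPolynomial τ K)).comp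
        (rename (Sum.inr : τ → σ ⊕ τ)).toRingHom
      = (C : MvPolynomial τ K →+* MvPolynomial σ (MvPolynomial τ K)) := by
  apply MvPolynomial.ringHom_ext <;> intro x <;> simp

lemma map_inl_eq_comap (A : Ideal (MvPolynomial σ K)) :
    Ideal.map (rename (Sum.inl : σ → σ ⊕ τ)) A
      = Ideal.comap (↑(sumAlgEquiv K σ τ) : MvPolynomial (σ ⊕ τ) K →+* _)
          (Ideal.map (MvPolynomial.map (algebraMap K (MvPolynomial τ K))) A) := by
  rw [← comp_inl_eq, ← Ideal.map_map]
  exact (Ideal.comap_map_of_bijective _ (sumAlgEquiv K σ τ).bijective).symm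

lemma map_inr_eq_comap (J0 : Ideal (MvPolynomial τ K)) :
    Ideal.map (rename (Sum.inr : τ → σ ⊕ τ)) J0
      = Ideal.comap (↑(sumAlgEquiv K σ τ) : MvPolynomial (σ ⊕ τ) K →+* _)
          (Ideal.map (C : MvPolynomial τ K →+* MvPolynomial σ (MvPolynomial τ K)) J0) := by
  rw [← comp_inr_eq, ← Ideal.map_map]
  exact (Ideal.comap_map_of_bijective _ (sumAlgEquiv K σ τ).bijective).symm

theorem iInf_sup_eq_sum_left {ι : Sort*} (Is : ι → Ideal (MvPolynomial σ K))
    (J0 : Ideal (MvPolynomial τ K)) :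
    (⨅ i, (Ideal.map (rename (Sum.inl : σ → σ ⊕ τ)) (Is i)
        ⊔ Ideal.map (rename (Sum.inr : τ → σ ⊕ τ)) J0))
      = Ideal.map (rename (Sum.inl : σ → σ ⊕ τ)) (⨅ i, Is i)
        ⊔ Ideal.map (rename (Sum.inr : τ → σ ⊕ τ)) J0 := by
  have hsurj : Function.Surjective
      (↑(sumAlgEquiv K σ τ) : MvPolynomial (σ ⊕ τ) K →+* MvPolynomial σ (MvPolynomial τ K)) :=
    (sumAlgEquiv K σ τ).surjective
  simp only [map_inl_eq_comap, map_inr_eq_comap,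
    ← comap_sup_of_surjective _ hsurj, ← Ideal.comap_iInf, iInf_sup_eq_V]

lemma comp_swap_inl :
    (↑(renameEquiv K (Equiv.sumComm σ τ)) : MvPolynomial (σ ⊕ τ) K →+* MvPolynomial (τ ⊕ σ) K).comp
        (rename (Sum.inl : σ → σ ⊕ τ)).toRingHom
      = (rename (Sum.inr : σ → τ ⊕ σ)).toRingHom := by
  apply MvPolynomial.ringHom_ext <;> intro x <;> simp

lemma comp_swap_inr :
    (↑(renameEquiv K (Equiv.sumComm σ τ)) : MvPolynomial (σ ⊕ τ) K →+* MvPolynomial (τ ⊕ σ) K).comp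
        (rename (Sum.inr : τ → σ ⊕ τ)).toRingHom
      = (rename (Sum.inl : τ → τ ⊕ σ)).toRingHom := by
  apply MvPolynomial.ringHom_ext <;> intro x <;> simp

lemma map_inl_swap (A : Ideal (MvPolynomial σ K)) :
    Ideal.map (rename (Sum.inl : σ → σ ⊕ τ)) A
      = Ideal.comap (↑(renameEquiv K (Equiv.sumComm σ τ)) : MvPolynomial (σ ⊕ τ) K →+* _)
          (Ideal.map (rename (Sum.inr : σ → τ ⊕ σ)) A) := by
  have h : Ideal.map (rename (Sum.inr : σ → τ ⊕ σ)) A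
      = Ideal.map (↑(renameEquiv K (Equiv.sumComm σ τ)) : MvPolynomial (σ ⊕ τ) K →+* _)
          (Ideal.map (rename (Sum.inl : σ → σ ⊕ τ)) A) := by
    rw [show Ideal.map (rename (Sum.inl : σ → σ ⊕ τ)) A
        = Ideal.map (rename (Sum.inl : σ → σ ⊕ τ)).toRingHom A from rfl,
      Ideal.map_map, comp_swap_inl]
    rfl
  rw [h]
  exact (Ideal.comap_map_of_bijective _ (renameEquiv K (Equiv.sumComm σ τ)).bijective).symm

lemma map_inr_swap (B : Ideal (MvPolynomial τ K)) :
    Ideal.map (rename (Sum.inr : τ → σ ⊕ τ)) B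
      = Ideal.comap (↑(renameEquiv K (Equiv.sumComm σ τ)) : MvPolynomial (σ ⊕ τ) K →+* _)
          (Ideal.map (rename (Sum.inl : τ → τ ⊕ σ)) B) := by
  have h : Ideal.map (rename (Sum.inl : τ → τ ⊕ σ)) B
      = Ideal.map (↑(renameEquiv K (Equiv.sumComm σ τ)) : MvPolynomial (σ ⊕ τ) K →+* _)
          (Ideal.map (rename (Sum.inr : τ → σ ⊕ τ)) B) := by
    rw [show Ideal.map (rename (Sum.inr : τ → σ ⊕ τ)) B
        = Ideal.map (rename (Sum.inr : τ → σ ⊕ τ)).toRingHom B from rfl,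
      Ideal.map_map, comp_swap_inr]
    rfl
  rw [h]
  exact (Ideal.comap_map_of_bijective _ (renameEquiv K (Equiv.sumComm σ τ)).bijective).symm

theorem iInf_sup_eq_sum_right {ι : Sort*} (I0 : Ideal (MvPolynomial σ K))
    (Js : ι → Ideal (MvPolynomial τ K)) :
    (⨅ j, (Ideal.map (rename (Sum.inl : σ → σ ⊕ τ)) I0
        ⊔ Ideal.map (rename (Sum.inr : τ → σ ⊕ τ)) (Js j)))
      = Ideal.map (rename (Sum.inl : σ → σ ⊕ τ)) I0
        ⊔ Ideal.map (rename (Sum.inr : τ → σ ⊕ τ)) (⨅ j, Js j) := by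
  have hsurj : Function.Surjective
      (↑(renameEquiv K (Equiv.sumComm σ τ)) : MvPolynomial (σ ⊕ τ) K →+* _) :=
    fun x => (renameEquiv K (Equiv.sumComm σ τ)).surjective x
  have hmain := iInf_sup_eq_sum_left (K := K) (σ := τ) (τ := σ) Js I0
  calc (⨅ j, (Ideal.map (rename (Sum.inl : σ → σ ⊕ τ)) I0
        ⊔ Ideal.map (rename (Sum.inr : τ → σ ⊕ τ)) (Js j)))
      = ⨅ j, Ideal.comap (↑(renameEquiv K (Equiv.sumComm σ τ)) : MvPolynomial (σ ⊕ τ) K →+* _)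
          (Ideal.map (rename (Sum.inr : σ → τ ⊕ σ)) I0
            ⊔ Ideal.map (rename (Sum.inl : τ → τ ⊕ σ)) (Js j)) := by
        refine iInf_congr fun j => ?_
        rw [map_inl_swap I0, map_inr_swap (Js j), ← comap_sup_of_surjective _ hsurj]
    _ = Ideal.comap (↑(renameEquiv K (Equiv.sumComm σ τ)) : MvPolynomial (σ ⊕ τ) K →+* _)
          (⨅ j, (Ideal.map (rename (Sum.inl : τ → τ ⊕ σ)) (Js j)
            ⊔ Ideal.map (rename (Sum.inr : σ → τ ⊕ σ)) I0)) := by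
        rw [Ideal.comap_iInf]
        exact iInf_congr fun j => by rw [sup_comm]
    _ = Ideal.comap (↑(renameEquiv K (Equiv.sumComm σ τ)) : MvPolynomial (σ ⊕ τ) K →+* _)
          (Ideal.map (rename (Sum.inl : τ → τ ⊕ σ)) (⨅ j, Js j)
            ⊔ Ideal.map (rename (Sum.inr : σ → τ ⊕ σ)) I0) := by rw [hmain]
    _ = Ideal.map (rename (Sum.inl : σ → σ ⊕ τ)) I0
        ⊔ Ideal.map (rename (Sum.inr : τ → σ ⊕ τ)) (⨅ j, Js j) := by
        rw [comap_sup_of_surjective _ hsurj, ← map_inr_swap (⨅ j, Js j), ← map_inl_swap I0,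
          sup_comm]

theorem iInf_iInf_sup {ι ι' : Sort*} (Is : ι → Ideal (MvPolynomial σ K))
    (Js : ι' → Ideal (MvPolynomial τ K)) :
    (⨅ i, ⨅ j, (Ideal.map (rename (Sum.inl : σ → σ ⊕ τ)) (Is i)
        ⊔ Ideal.map (rename (Sum.inr : τ → σ ⊕ τ)) (Js j)))
      = Ideal.map (rename (Sum.inl : σ → σ ⊕ τ)) (⨅ i, Is i)
        ⊔ Ideal.map (rename (Sum.inr : τ → σ ⊕ τ)) (⨅ j, Js j) := by
  rw [iInf_congr fun i => iInf_sup_eq_sum_right (Is i) Js]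
  exact iInf_sup_eq_sum_left Is (⨅ j, Js j)

end Transfer

variable {K : Type*} [Field K] {ι : Type*}

/-- The substitution `x_i ↦ y_i z_i`, `y_i ↦ y_i`, `z_i ↦ z_i`. -/
def hadPhi : MvPolynomial (ι ⊕ (ι ⊕ ι)) K →ₐ[K] MvPolynomial (ι ⊕ ι) K :=
  aeval (Sum.elim (fun i => X (Sum.inl i) * X (Sum.inr i)) X)

/-- The ideal generated by the relations `x_i - y_i z_i`. -/
def hadH (K : Type*) [Field K] (ι : Type*) : Ideal (MvPolynomial (ι ⊕ (ι ⊕ ι)) K) :=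
  Ideal.span { f | ∃ i : ι,
    f = X (Sum.inl i) - X (Sum.inr (Sum.inl i)) * X (Sum.inr (Sum.inr i)) }

lemma hadPhi_rename_inr (u : MvPolynomial (ι ⊕ ι) K) :
    hadPhi (rename (Sum.inr : ι ⊕ ι → ι ⊕ (ι ⊕ ι)) u) = u := by
  rw [hadPhi, aeval_rename]
  have : (Sum.elim (fun i => X (Sum.inl i) * X (Sum.inr i)) X
      ∘ (Sum.inr : ι ⊕ ι → ι ⊕ (ι ⊕ ι))) = (X : ι ⊕ ι → MvPolynomial (ι ⊕ ι) K) := rfl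
  rw [this, aeval_X_left_apply]

lemma hadPhi_surjective : Function.Surjective (hadPhi (K := K) (ι := ι)) :=
  fun u => ⟨rename Sum.inr u, hadPhi_rename_inr u⟩

lemma sub_rename_hadPhi_mem (f : MvPolynomial (ι ⊕ (ι ⊕ ι)) K) :
    f - rename Sum.inr (hadPhi f) ∈ hadH K ι := by
  induction f using MvPolynomial.induction_on with
  | C a => simp [hadPhi]
  | add p q hp hq =>
    have h : (p + q) - rename Sum.inr (hadPhi (p + q))
        = (p - rename Sum.inr (hadPhi p)) + (q - rename Sum.inr (hadPhi q)) := by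
      rw [map_add, map_add]; ring
    rw [h]; exact add_mem hp hq
  | mul_X p v hp =>
    have hXv : X v - rename (Sum.inr : ι ⊕ ι → ι ⊕ (ι ⊕ ι)) (hadPhi (X v)) ∈ hadH K ι := by
      cases v with
      | inl i =>
        have h1 : hadPhi (X (Sum.inl i) : MvPolynomial (ι ⊕ (ι ⊕ ι)) K)
            = X (Sum.inl i) * X (Sum.inr i) := by simp [hadPhi]
        rw [h1, map_mul, rename_X, rename_X]
        exact Ideal.subset_span ⟨i, rfl⟩
      | inr w =>
        have h1 : hadPhi (X (Sum.inr w) : MvPolynomial (ι ⊕ (ι ⊕ ι)) K) = X w := by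
          simp [hadPhi]
        rw [h1, rename_X, sub_self]
        exact zero_mem _
    have h : p * X v - rename Sum.inr (hadPhi (p * X v))
        = rename Sum.inr (hadPhi p) * (X v - rename Sum.inr (hadPhi (X v)))
          + (p - rename Sum.inr (hadPhi p)) * X v := by
      rw [map_mul, map_mul]; ring
    rw [h]
    exact add_mem (Ideal.mul_mem_left _ _ hXv) (Ideal.mul_mem_right _ _ hp)

lemma ker_le_hadH {f : MvPolynomial (ι ⊕ (ι ⊕ ι)) K} (hf : hadPhi f = 0) : f ∈ hadH K ι := by
  have := sub_rename_hadPhi_mem f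
  rwa [hf, map_zero, sub_zero] at this

lemma map_hadPhi_hadH : Ideal.map (hadPhi (K := K) (ι := ι)) (hadH K ι) = ⊥ := by
  rw [hadH, Ideal.map_span, ← le_bot_iff, Ideal.span_le]
  rintro x ⟨y, ⟨i, rfl⟩, rfl⟩
  have : hadPhi ((X (Sum.inl i) - X (Sum.inr (Sum.inl i)) * X (Sum.inr (Sum.inr i)))
      : MvPolynomial (ι ⊕ (ι ⊕ ι)) K) = 0 := by
    simp [hadPhi]
  simp [this]

variable {K : Type*} [Field K] {ι : Type*}

lemma hadPhi_comp_r1 :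
    (hadPhi (K := K) (ι := ι)).toRingHom.comp
        (rename (fun i : ι => (Sum.inr (Sum.inl i) : ι ⊕ (ι ⊕ ι)))).toRingHom
      = (rename (Sum.inl : ι → ι ⊕ ι)).toRingHom := by
  apply MvPolynomial.ringHom_ext <;> intro x <;> simp [hadPhi]

lemma hadPhi_comp_r2 :
    (hadPhi (K := K) (ι := ι)).toRingHom.comp
        (rename (fun i : ι => (Sum.inr (Sum.inr i) : ι ⊕ (ι ⊕ ι)))).toRingHom
      = (rename (Sum.inr : ι → ι ⊕ ι)).toRingHom := by
  apply MvPolynomial.ringHom_ext <;> intro x <;> simp [hadPhi]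

lemma sup_sup_hadH_eq_comap (A B : Ideal (MvPolynomial ι K)) :
    Ideal.map (rename (fun i : ι => (Sum.inr (Sum.inl i) : ι ⊕ (ι ⊕ ι)))) A
        ⊔ Ideal.map (rename (fun i : ι => (Sum.inr (Sum.inr i) : ι ⊕ (ι ⊕ ι)))) B
        ⊔ hadH K ι
      = Ideal.comap (hadPhi (K := K) (ι := ι))
          (Ideal.map (rename (Sum.inl : ι → ι ⊕ ι)) A
            ⊔ Ideal.map (rename (Sum.inr : ι → ι ⊕ ι)) B) := by
  have h1 : Ideal.map (hadPhi (K := K) (ι := ι))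
      (Ideal.map (rename (fun i : ι => (Sum.inr (Sum.inl i) : ι ⊕ (ι ⊕ ι)))) A)
      = Ideal.map (rename (Sum.inl : ι → ι ⊕ ι)) A := by
    have hm := Ideal.map_map (I := A)
      (rename (fun i : ι => (Sum.inr (Sum.inl i) : ι ⊕ (ι ⊕ ι)))).toRingHom
      (hadPhi (K := K) (ι := ι)).toRingHom
    rw [hadPhi_comp_r1] at hm
    exact hm
  have h2 : Ideal.map (hadPhi (K := K) (ι := ι))
      (Ideal.map (rename (fun i : ι => (Sum.inr (Sum.inr i) : ι ⊕ (ι ⊕ ι)))) B)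
      = Ideal.map (rename (Sum.inr : ι → ι ⊕ ι)) B := by
    have hm := Ideal.map_map (I := B)
      (rename (fun i : ι => (Sum.inr (Sum.inr i) : ι ⊕ (ι ⊕ ι)))).toRingHom
      (hadPhi (K := K) (ι := ι)).toRingHom
    rw [hadPhi_comp_r2] at hm
    exact hm
  have hmap : Ideal.map (hadPhi (K := K) (ι := ι))
      (Ideal.map (rename (fun i : ι => (Sum.inr (Sum.inl i) : ι ⊕ (ι ⊕ ι)))) A
        ⊔ Ideal.map (rename (fun i : ι => (Sum.inr (Sum.inr i) : ι ⊕ (ι ⊕ ι)))) B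
        ⊔ hadH K ι)
      = Ideal.map (rename (Sum.inl : ι → ι ⊕ ι)) A
          ⊔ Ideal.map (rename (Sum.inr : ι → ι ⊕ ι)) B := by
    rw [Ideal.map_sup, Ideal.map_sup, map_hadPhi_hadH, sup_bot_eq, h1, h2]
  rw [← hmap, Ideal.comap_map_of_surjective' (hadPhi (K := K) (ι := ι)) hadPhi_surjective]
  symm
  rw [sup_eq_left]
  intro x hx
  exact (le_sup_right : hadH K ι ≤ _) (ker_le_hadH (RingHom.mem_ker.mp hx))

end

noncomputable section

variable {K : Type*} [Field K]

/-- The Hadamard product of two ideals `I, J ⊆ K[x_0,…,x_N]`: introduce new variables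
`y_0,…,y_N` and `z_0,…,z_N` (encoded via a sum type), map `I` via `x_i ↦ y_i`, `J` via
`x_i ↦ z_i`, add the relations `x_i − y_i z_i`, and eliminate `y, z`. -/
def hadamardProduct (N : ℕ) (I J : Ideal (MvPolynomial (Fin (N+1)) K)) :
    Ideal (MvPolynomial (Fin (N+1)) K) :=
  Ideal.comap
    (rename (Sum.inl : Fin (N+1) → Fin (N+1) ⊕ (Fin (N+1) ⊕ Fin (N+1))))
    (Ideal.map (rename (fun i : Fin (N+1) =>
        (Sum.inr (Sum.inl i) : Fin (N+1) ⊕ (Fin (N+1) ⊕ Fin (N+1))))) I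
      + Ideal.map (rename (fun i : Fin (N+1) =>
        (Sum.inr (Sum.inr i) : Fin (N+1) ⊕ (Fin (N+1) ⊕ Fin (N+1))))) J
      + Ideal.span { f | ∃ i : Fin (N+1),
          f = X (Sum.inl i) - X (Sum.inr (Sum.inl i)) * X (Sum.inr (Sum.inr i)) })

/-- If `I = I_1 ∩ … ∩ I_s` and `J = J_1 ∩ … ∩ J_t` (e.g. primary decompositions), then
`I ⋆ J = ⋂_{i,j} (I_i ⋆ J_j)`. -/
theorem hadamardProduct_of_finite_intersections [IsAlgClosed K] {N : ℕ} {s t : ℕ}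
    (I : Fin s → Ideal (MvPolynomial (Fin (N+1)) K))
    (J : Fin t → Ideal (MvPolynomial (Fin (N+1)) K)) :
    hadamardProduct N (⨅ i, I i) (⨅ j, J j)
      = ⨅ i, ⨅ j, hadamardProduct N (I i) (J j) := by
  have hspan : Ideal.span { f : MvPolynomial (Fin (N+1) ⊕ (Fin (N+1) ⊕ Fin (N+1))) K |
      ∃ i : Fin (N+1), f = X (Sum.inl i) - X (Sum.inr (Sum.inl i)) * X (Sum.inr (Sum.inr i)) }
      = hadH K (Fin (N+1)) := rfl
  simp only [hadamardProduct, Submodule.add_eq_sup, hspan, sup_sup_hadH_eq_comap,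
    ← Ideal.comap_iInf]
  rw [iInf_iInf_sup I J]

end
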